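/- Under the assumptions that A ∈ ℤ^{n×m} has full row rank, b ∈ ℤⁿ, every nonzero kernel vector of A has positive cost, and x > 0, the minimum energy feasible solution q satisfies |q_e| ≤ D·‖b/γ_A‖₁ for every coordinate e, where D and γ_A are as defined via the gcd-scaled determinants of A. -/

import Mathlib

open Matrix Submodule

private lemma span_cols_top {n m : ℕ} (A' : Matrix (Fin n) (Fin m) ℝ)
    (h : LinearIndependent ℝ (fun i => A' i)) :
    Submodule.span ℝ (Set.range A'ᵀ) = ⊤ := by
  have h1 : Function.Injective A'.vecMulLinear := by
    rw [Matrix.coe_vecMulLinear]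
    exact Matrix.vecMul_injective_iff.mpr h
  have h2 : A'ᵀ.rank = n := by
    rw [Matrix.rank, Matrix.mulVecLin_transpose, LinearMap.finrank_range_of_inj h1,
      Module.finrank_fin_fun]
  have h3 : Module.finrank ℝ (span ℝ (Set.range A'ᵀ)) = n := by
    change Module.finrank ℝ (span ℝ (Set.range A'.col)) = n
    rw [← Matrix.rank_eq_finrank_span_cols, ← Matrix.rank_transpose, h2]
  exact Submodule.eq_top_of_finrank_eq (by rw [h3, Module.finrank_fin_fun])

private lemma extend_cols {n m : ℕ} (A' : Matrix (Fin n) (Fin m) ℝ)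
    (hspan : Submodule.span ℝ (Set.range A'ᵀ) = ⊤)
    (S : Finset (Fin m))
    (hS : LinearIndependent ℝ (fun e : (S : Set (Fin m)) => A'ᵀ e)) :
    ∃ B : Finset (Fin m), S ⊆ B ∧ B.card = n ∧
      LinearIndependent ℝ (fun e : (B : Set (Fin m)) => A'ᵀ e) := by
  classical
  have cardle : ∀ S' : Finset (Fin m),
      LinearIndependent ℝ (fun e : (S' : Set (Fin m)) => A'ᵀ e) → S'.card ≤ n := by
    intro S' hS'
    have := hS'.fintype_card_le_finrank
    simpa [Module.finrank_fin_fun] using this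
  have main : ∀ k (S : Finset (Fin m)), n - S.card ≤ k →
      LinearIndependent ℝ (fun e : (S : Set (Fin m)) => A'ᵀ e) →
      ∃ B, S ⊆ B ∧ B.card = n ∧
        LinearIndependent ℝ (fun e : (B : Set (Fin m)) => A'ᵀ e) := by
    intro k
    induction k with
    | zero =>
      intro S hk hS
      have h1 : S.card = n :=
        le_antisymm (cardle S hS) (Nat.le_of_sub_eq_zero (Nat.le_zero.mp hk))
      exact ⟨S, Finset.Subset.refl S, h1, hS⟩
    | succ k ih =>
      intro S hk hS
      by_cases hcard : S.card = n
      · exact ⟨S, Finset.Subset.refl S, hcard, hS⟩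
      · have hlt : S.card < n := lt_of_le_of_ne (cardle S hS) hcard
        -- find a column not in the span
        have hex : ∃ e0, A'ᵀ e0 ∉ Submodule.span ℝ (A'ᵀ '' (S : Set (Fin m))) := by
          by_contra hno
          push_neg at hno
          have h2 : Submodule.span ℝ (Set.range A'ᵀ) ≤
              Submodule.span ℝ (A'ᵀ '' (S : Set (Fin m))) := by
            rw [Submodule.span_le]
            rintro w ⟨e, rfl⟩
            exact hno e
          have h3 : Module.finrank ℝ (Submodule.span ℝ (A'ᵀ '' (S : Set (Fin m)))) = n := by
            have : Submodule.span ℝ (A'ᵀ '' (S : Set (Fin m))) = ⊤ :=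
              top_unique (hspan ▸ h2)
            rw [this, finrank_top, Module.finrank_fin_fun]
          have h4 : Module.finrank ℝ (Submodule.span ℝ (A'ᵀ '' (S : Set (Fin m)))) ≤ S.card := by
            rw [show A'ᵀ '' (S : Set (Fin m)) = (fun e => A'ᵀ e) '' (S : Set (Fin m)) from rfl]
            refine le_trans (finrank_span_le_card _) ?_
            rw [Set.toFinset_image]
            exact le_trans (Finset.card_image_le) (by simp)
          omega
        obtain ⟨e0, he0⟩ := hex
        have he0S : e0 ∉ S := by
          intro hmem
          exact he0 (Submodule.subset_span (Set.mem_image_of_mem _ hmem))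
        have hins : LinearIndependent ℝ
            (fun e : ((insert e0 S : Finset (Fin m)) : Set (Fin m)) => A'ᵀ e) := by
          rw [Finset.coe_insert]
          exact (linearIndepOn_insert (by simpa using he0S)).mpr ⟨hS, he0⟩
        obtain ⟨B, hsub, hcard', hB⟩ := ih (insert e0 S)
          (by rw [Finset.card_insert_of_notMem he0S]; omega) hins
        exact ⟨B, le_trans (Finset.subset_insert e0 S) hsub, hcard', hB⟩
  exact main n S (Nat.sub_le _ _) hS

private lemma basic_bound {n m : ℕ} (A : Matrix (Fin n) (Fin m) ℤ) (b : Fin n → ℤ)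
    (γ : ℤ) (hγdvd : ∀ i j, γ ∣ A i j) (hγpos : 0 < γ)
    (D : ℝ) (hDpos : 0 < D)
    (hD : ∀ (k : ℕ), (k = n - 1 ∨ k = n) →
      ∀ (r : Fin k → Fin n) (s : Fin k → Fin m),
        Function.Injective r → Function.Injective s →
        |Matrix.det (Matrix.of fun i j => (A (r i) (s j) : ℝ) / (γ : ℝ))| ≤ D)
    (hrank : LinearIndependent ℝ (fun i : Fin n => fun j => (A i j : ℝ)))
    (f : Fin m → ℝ)
    (hf : (Matrix.of fun i j => (A i j : ℝ)).mulVec f = (fun i => (b i : ℝ)))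
    (hind : LinearIndependent ℝ
      (fun e : ((Finset.univ.filter (fun e => f e ≠ 0) : Finset (Fin m)) : Set (Fin m)) =>
        (Matrix.of fun i j => (A i j : ℝ))ᵀ e)) :
    ∀ e, |f e| ≤ D * ∑ i, |(b i : ℝ) / (γ : ℝ)| := by
  classical
  set A' : Matrix (Fin n) (Fin m) ℝ := Matrix.of fun i j => (A i j : ℝ) with hA'
  have hγR : (γ : ℝ) ≠ 0 := by positivity
  have hMnonneg : 0 ≤ D * ∑ i, |(b i : ℝ) / (γ : ℝ)| := by positivity
  set S : Finset (Fin m) := Finset.univ.filter (fun e => f e ≠ 0) with hSdef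
  obtain ⟨B, hSB, hBcard, hB⟩ := extend_cols A' (span_cols_top A' hrank) S hind
  set κ : Fin n ≃ B := (Finset.equivFinOfCardEq hBcard).symm with hκ
  set s : Fin n → Fin m := fun j => (κ j : Fin m) with hs
  have hsinj : Function.Injective s :=
    fun a b hab => κ.injective (Subtype.ext hab)
  set Msq : Matrix (Fin n) (Fin n) ℝ := Matrix.of fun i j => (A i (s j) : ℝ) / (γ : ℝ)
    with hMsq
  -- columns of Msq are linearly independent, so Msq is a unit
  have hunit : IsUnit Msq := by
    rw [← Matrix.linearIndependent_cols_iff_isUnit]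
    have h1 : LinearIndependent ℝ (fun j : Fin n => A'ᵀ (s j)) :=
      hB.comp κ κ.injective
    have h2 := h1.units_smul (fun _ => Units.mk0 ((γ : ℝ)⁻¹) (inv_ne_zero hγR))
    convert h2 using 1
    funext j
    ext i
    simp [Msq, A', div_eq_inv_mul, Units.smul_def]
    rfl
  have hdet : Msq.det ≠ 0 := by
    intro h0
    exact (Matrix.isUnit_iff_isUnit_det Msq).mp hunit |>.ne_zero h0
  -- integrality : |det Msq| ≥ 1
  set N : Matrix (Fin n) (Fin n) ℤ := Matrix.of fun i j => A i (s j) / γ with hN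
  have hMsqN : Msq = N.map (Int.cast : ℤ → ℝ) := by
    ext i j
    obtain ⟨t, ht⟩ := hγdvd i (s j)
    simp only [Msq, N, Matrix.map_apply, Matrix.of_apply, ht]
    rw [Int.mul_ediv_cancel_left _ (by omega : γ ≠ 0)]
    push_cast
    field_simp
  have hdetN : Msq.det = ((N.det : ℤ) : ℝ) := by
    have := RingHom.map_det (Int.castRingHom ℝ) N
    rw [hMsqN]
    exact this.symm
  have hdet1 : 1 ≤ |Msq.det| := by
    rw [hdetN]
    have hN0 : N.det ≠ 0 := by
      intro h0; rw [hdetN, h0] at hdet; exact hdet (by norm_num)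
    rw [← Int.cast_abs]
    exact_mod_cast Int.one_le_abs (by exact_mod_cast hN0)
  -- Cramer
  set b2 : Fin n → ℝ := fun i => (b i : ℝ) / (γ : ℝ) with hb2
  set g : Fin n → ℝ := fun j => f (s j) with hg
  have hfB : ∀ e, e ∉ B → f e = 0 := by
    intro e he
    by_contra hne
    exact he (hSB (by simp [S, hne]))
  have hMg : Msq.mulVec g = b2 := by
    funext i
    have hrow : ∑ e, A' i e * f e = (b i : ℝ) := by
      have := congrFun hf i
      simpa [Matrix.mulVec, dotProduct] using this
    have hsum : ∑ j : Fin n, A' i (s j) * f (s j) = (b i : ℝ) := by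
      rw [← hrow]
      have e1 : ∑ j : Fin n, A' i (s j) * f (s j)
          = ∑ e : B, A' i (e : Fin m) * f (e : Fin m) :=
        Equiv.sum_comp κ (fun e : B => A' i (e : Fin m) * f (e : Fin m))
      rw [e1, Finset.univ_eq_attach, Finset.sum_attach B (fun e => A' i e * f e)]
      refine Finset.sum_subset (Finset.subset_univ B) ?_
      intro e _ he
      rw [hfB e he, mul_zero]
    show ∑ j, Msq i j * g j = b2 i
    calc ∑ j, Msq i j * g j = ∑ j, (A' i (s j) * f (s j)) / (γ : ℝ) := by
          apply Finset.sum_congr rfl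
          intro j _
          simp [Msq, A', g, div_mul_eq_mul_div]
      _ = (∑ j, A' i (s j) * f (s j)) / (γ : ℝ) := by rw [Finset.sum_div]
      _ = b2 i := by rw [hsum]
  have hcramer : Matrix.cramer Msq b2 = Msq.det • g := by
    have h1 := Matrix.mulVec_cramer Msq b2
    have h2 : Msq.det • b2 = Msq.mulVec (Msq.det • g) := by
      rw [Matrix.mulVec_smul, hMg]
    have hinj : Function.Injective Msq.mulVec :=
      Matrix.mulVec_injective_iff_isUnit.mpr hunit
    exact hinj (by rw [h1, h2])
  -- now the bound
  intro e
  by_cases hfe : f e = 0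
  · rw [hfe, abs_zero]; exact hMnonneg
  · have heB : e ∈ B := hSB (by simp [S, hfe])
    set j : Fin n := κ.symm ⟨e, heB⟩ with hj
    have hsj : s j = e := by simp [s, j]
    -- n must be a successor
    rcases n with _ | n'
    · exact absurd j.2 (by omega)
    -- f e = g j = det (update) / det Msq
    have hgj : f e = (Msq.updateCol j b2).det / Msq.det := by
      have := congrFun hcramer j
      rw [Matrix.cramer_apply] at this
      have : (Msq.updateCol j b2).det = Msq.det * g j := this
      rw [eq_div_iff hdet, ← hsj]
      simpa [mul_comm] using this.symm
    -- expand determinant along column j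
    have hminor : ∀ i : Fin (n' + 1),
        |((Msq.updateCol j b2).submatrix i.succAbove j.succAbove).det| ≤ D := by
      intro i
      have hsub : (Msq.updateCol j b2).submatrix i.succAbove j.succAbove
          = Matrix.of fun a c => (A (i.succAbove a) (s (j.succAbove c)) : ℝ) / (γ : ℝ) := by
        ext a c
        simp only [Matrix.submatrix_apply]
        rw [Matrix.updateCol_ne (Fin.succAbove_ne j c)]
        rfl
      rw [hsub]
      exact hD n' (Or.inl (by omega)) _ _ Fin.succAbove_right_injective
        (hsinj.comp Fin.succAbove_right_injective)
    have hupd : |(Msq.updateCol j b2).det| ≤ D * ∑ i, |b2 i| := by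
      rw [Matrix.det_succ_column _ j]
      refine le_trans (Finset.abs_sum_le_sum_abs _ _) ?_
      rw [Finset.mul_sum]
      apply Finset.sum_le_sum
      intro i _
      rw [Matrix.updateCol_self, abs_mul, abs_mul, abs_pow, abs_neg, abs_one, one_pow,
        one_mul, mul_comm]
      exact mul_le_mul (hminor i) le_rfl (abs_nonneg _) (le_of_lt hDpos)
    rw [hgj, abs_div]
    calc |(Msq.updateCol j b2).det| / |Msq.det| ≤ |(Msq.updateCol j b2).det| :=
          div_le_self (abs_nonneg _) hdet1
      _ ≤ D * ∑ i, |b2 i| := hupd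

/-- The minimum energy feasible solution satisfies |q_e| ≤ D·‖b/γ_A‖₁. -/
theorem min_energy_bound {n m : ℕ} (A : Matrix (Fin n) (Fin m) ℤ) (b : Fin n → ℤ)
    (c x : Fin m → ℝ) (hc : 0 ≤ c) (hx : ∀ e, 0 < x e)
    (hrank : LinearIndependent ℝ (fun i : Fin n => fun j => (A i j : ℝ)))
    (γ : ℤ)
    (hγ : γ = (Finset.univ.filter (fun p : Fin n × Fin m => A p.1 p.2 ≠ 0)).gcd
      (fun p => A p.1 p.2))
    (hγpos : 0 < γ)
    (D : ℝ) (hDpos : 0 < D)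
    (hD : ∀ (k : ℕ), (k = n - 1 ∨ k = n) →
      ∀ (r : Fin k → Fin n) (s : Fin k → Fin m),
        Function.Injective r → Function.Injective s →
        |Matrix.det (Matrix.of fun i j => (A (r i) (s j) : ℝ) / (γ : ℝ))| ≤ D)
    (hker : ∀ z : Fin m → ℝ, (Matrix.of fun i j => (A i j : ℝ)).mulVec z = 0 →
      z ≠ 0 → 0 < ∑ e, c e * |z e|)
    (q : Fin m → ℝ)
    (hq : (Matrix.of fun i j => (A i j : ℝ)).mulVec q = (fun i => (b i : ℝ)))
    (hmin : ∀ f : Fin m → ℝ,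
      (Matrix.of fun i j => (A i j : ℝ)).mulVec f = (fun i => (b i : ℝ)) →
      ∑ e, (c e / x e) * (q e) ^ 2 ≤ ∑ e, (c e / x e) * (f e) ^ 2) :
    ∀ e, |q e| ≤ D * ∑ i, |(b i : ℝ) / (γ : ℝ)| := by
  classical
  set A' : Matrix (Fin n) (Fin m) ℝ := Matrix.of fun i j => (A i j : ℝ) with hA'
  set b' : Fin n → ℝ := fun i => (b i : ℝ) with hb'
  set M : ℝ := D * ∑ i, |(b i : ℝ) / (γ : ℝ)| with hM
  have hMnonneg : 0 ≤ M := by rw [hM]; positivity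
  have hγdvd : ∀ i j, γ ∣ A i j := by
    intro i j
    by_cases h : A i j = 0
    · simp [h]
    · rw [hγ]
      have hmem : (i, j) ∈ Finset.univ.filter (fun p : Fin n × Fin m => A p.1 p.2 ≠ 0) := by
        simp only [Finset.mem_filter, Finset.mem_univ, true_and]
        exact h
      exact Finset.gcd_dvd hmem
  -- Conformality with respect to q
  set Conf : (Fin m → ℝ) → Prop := fun v => ∀ e, (q e = 0 → v e = 0) ∧ 0 ≤ q e * v e
    with hConf
  -- There is no nonzero conformal circulation
  have lemC : ∀ z : Fin m → ℝ, A'.mulVec z = 0 → Conf z → z = 0 := by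
    intro z hz hcz
    by_contra hzne
    set E : ℝ := ∑ e, (c e / x e) * (z e) ^ 2 with hE
    set Sv : ℝ := ∑ e, (c e / x e) * (q e * z e) with hSv
    have hcx : ∀ e, 0 ≤ c e / x e := fun e => div_nonneg (hc e) (le_of_lt (hx e))
    have hE0 : 0 ≤ E := by
      rw [hE]; exact Finset.sum_nonneg fun e _ => mul_nonneg (hcx e) (sq_nonneg _)
    have hSnn : 0 ≤ Sv := by
      rw [hSv]
      exact Finset.sum_nonneg fun e _ => mul_nonneg (hcx e) ((hcz e).2)
    have expand : ∀ t : ℝ, ∑ e, (c e / x e) * (q e - t * z e) ^ 2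
        = (∑ e, (c e / x e) * (q e) ^ 2) - 2 * t * Sv + t ^ 2 * E := by
      intro t
      rw [hSv, hE, Finset.mul_sum, Finset.mul_sum, ← Finset.sum_sub_distrib,
        ← Finset.sum_add_distrib]
      apply Finset.sum_congr rfl
      intro e _
      ring
    have key : ∀ t : ℝ, 0 ≤ -2 * t * Sv + t ^ 2 * E := by
      intro t
      have hfeas : A'.mulVec (fun e => q e - t * z e) = b' := by
        have heq : (fun e => q e - t * z e) = q - t • z := by
          funext e; simp [mul_comm]
        rw [heq, Matrix.mulVec_sub, Matrix.mulVec_smul, hq, hz]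
        funext i; simp [b']
      have := hmin _ hfeas
      rw [expand t] at this
      linarith
    have hS0 : Sv ≤ 0 := by
      by_contra hpos
      push_neg at hpos
      have ht := key (Sv / (E + 1))
      have h1 : 0 < E + 1 := by linarith
      have h2 : Sv / (E + 1) * E ≤ Sv := by
        rw [div_mul_eq_mul_div, div_le_iff₀ h1]
        nlinarith
      nlinarith [mul_pos (div_pos hpos h1) hpos]
    have hSeq : Sv = 0 := le_antisymm hS0 hSnn
    have hterms : ∀ e ∈ Finset.univ, (c e / x e) * (q e * z e) = 0 := by
      rw [← Finset.sum_eq_zero_iff_of_nonneg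
        (fun e _ => mul_nonneg (hcx e) ((hcz e).2))]
      rw [← hSv]; exact hSeq
    have hczero : ∑ e, c e * |z e| = 0 := by
      apply Finset.sum_eq_zero
      intro e _
      by_cases hze : z e = 0
      · simp [hze]
      · have hqe : q e ≠ 0 := by
          intro h0
          exact hze ((hcz e).1 h0)
        have hqz : 0 < q e * z e :=
          lt_of_le_of_ne (hcz e).2 (Ne.symm (mul_ne_zero hqe hze))
        have := hterms e (Finset.mem_univ e)
        have hcxz : c e / x e = 0 := by
          rcases mul_eq_zero.mp this with h | h
          · exact h
          · exact absurd h (ne_of_gt hqz)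
        have hce : c e = 0 := by
          rcases div_eq_zero_iff.mp hcxz with h | h
          · exact h
          · exact absurd h (ne_of_gt (hx e))
        simp [hce]
    have := hker z hz hzne
    rw [hczero] at this
    exact lt_irrefl 0 this
  -- Main induction on the support size
  have main : ∀ (k : ℕ) (v : Fin m → ℝ),
      (Finset.univ.filter (fun e => v e ≠ 0)).card ≤ k →
      A'.mulVec v = b' → Conf v → ∀ e, |v e| ≤ M := by
    intro k
    induction k with
    | zero =>
      intro v hcard hv hconf e
      have hempty : (Finset.univ.filter (fun e => v e ≠ 0)) = ∅ :=
        Finset.card_eq_zero.mp (Nat.le_zero.mp hcard)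
      have hve : v e = 0 := by
        by_contra hne
        have : e ∈ Finset.univ.filter (fun e => v e ≠ 0) := by simp [hne]
        rw [hempty] at this
        exact absurd this (Finset.notMem_empty e)
      rw [hve, abs_zero]; exact hMnonneg
    | succ k ih =>
      intro v hcard hv hconf
      set S : Finset (Fin m) := Finset.univ.filter (fun e => v e ≠ 0) with hSdef
      by_cases hLI : LinearIndependent ℝ (fun e : (S : Set (Fin m)) => A'ᵀ e)
      · exact basic_bound A b γ hγdvd hγpos D hDpos hD hrank v hv hLI
      · -- get a kernel vector supported on S
        obtain ⟨g, hgsum, i0, hgi0⟩ := Fintype.not_linearIndependent_iff.mp hLI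
        set z : Fin m → ℝ := fun e => if h : e ∈ S then g ⟨e, Finset.mem_coe.mpr h⟩ else 0
          with hzdef
        have hzval : ∀ e : (S : Set (Fin m)), z e = g e := by
          rintro ⟨e, he⟩
          have heS : e ∈ S := Finset.mem_coe.mp he
          simp only [hzdef, dif_pos heS]
        have hz0 : z ≠ 0 := fun h0 => hgi0 (by rw [← hzval i0, h0]; rfl)
        have hzsupp : ∀ e, z e ≠ 0 → v e ≠ 0 := by
          intro e hze
          by_cases h : e ∈ S
          · have h' := h
            rw [hSdef] at h'
            exact (Finset.mem_filter.mp h').2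
          · exact absurd (by simp [hzdef, h]) hze
        have hzker : A'.mulVec z = 0 := by
          funext i
          have hgi := congrFun hgsum i
          simp only [Finset.sum_apply, Pi.smul_apply, Pi.zero_apply, smul_eq_mul] at hgi
          show ∑ e, A' i e * z e = 0
          have h1 : ∑ e, A' i e * z e = ∑ e ∈ S, A' i e * z e := by
            symm
            apply Finset.sum_subset (Finset.subset_univ S)
            intro e _ he
            simp [hzdef, he]
          have h2 : ∑ e : (S : Set (Fin m)), A' i (e : Fin m) * z (e : Fin m)
              = ∑ e ∈ S, A' i e * z e := Finset.sum_finset_coe (fun e => A' i e * z e) S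
          rw [h1, ← h2, ← hgi]
          apply Finset.sum_congr rfl
          intro e _
          rw [hzval e]
          simp [Matrix.transpose_apply, mul_comm]
        -- sign sets
        set Pneg : Finset (Fin m) := Finset.univ.filter (fun e => q e * z e < 0) with hPneg
        set Ppos : Finset (Fin m) := Finset.univ.filter (fun e => 0 < q e * z e) with hPpos
        have hPnegne : Pneg.Nonempty := by
          rw [Finset.nonempty_iff_ne_empty]
          intro hempty
          apply hz0
          apply lemC z hzker
          intro e
          constructor
          · intro hqe
            by_contra hze
            exact (hzsupp e hze) ((hconf e).1 hqe)
          · by_contra hlt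
            push_neg at hlt
            have : e ∈ Pneg := by
              rw [hPneg]
              simp only [Finset.mem_filter, Finset.mem_univ, true_and]
              exact hlt
            rw [hempty] at this
            exact absurd this (Finset.notMem_empty e)
        have hPposne : Ppos.Nonempty := by
          rw [Finset.nonempty_iff_ne_empty]
          intro hempty
          have hnegz : (fun e => -z e) = 0 := by
            apply lemC _ (by rw [show (fun e => -z e) = -z from rfl, Matrix.mulVec_neg,
              hzker, neg_zero])
            intro e
            constructor
            · intro hqe
              by_contra hze
              have hze' : z e ≠ 0 := fun h => hze (by show -z e = 0; rw [h, neg_zero])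
              exact (hzsupp e hze') ((hconf e).1 hqe)
            · show 0 ≤ q e * -z e
              rw [mul_neg, neg_nonneg]
              by_contra hlt
              push_neg at hlt
              have hlt' : 0 < q e * z e := hlt
              have : e ∈ Ppos := by
                rw [hPpos]
                simp only [Finset.mem_filter, Finset.mem_univ, true_and]
                exact hlt'
              rw [hempty] at this
              exact absurd this (Finset.notMem_empty e)
          apply hz0
          funext e
          have := congrFun hnegz e
          simpa using this
        -- basic facts about elements of Pneg/Ppos
        have hfact : ∀ e, (e ∈ Pneg ∨ e ∈ Ppos) → 0 < q e * v e := by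
          intro e he
          have hze : z e ≠ 0 := by
            rcases he with h | h
            · intro h0
              have h' : q e * z e < 0 := by
                rw [hPneg] at h
                exact (Finset.mem_filter.mp h).2
              rw [h0, mul_zero] at h'; exact lt_irrefl 0 h'
            · intro h0
              have h' : 0 < q e * z e := by
                rw [hPpos] at h
                exact (Finset.mem_filter.mp h).2
              rw [h0, mul_zero] at h'; exact lt_irrefl 0 h'
          have hve : v e ≠ 0 := hzsupp e hze
          have hqe : q e ≠ 0 := fun h0 => hve ((hconf e).1 h0)
          exact lt_of_le_of_ne (hconf e).2 (Ne.symm (mul_ne_zero hqe hve))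
        -- extreme step sizes
        obtain ⟨ep, hep, hepmin⟩ := Finset.exists_min_image Pneg
          (fun e => -(q e * v e / (q e * z e))) hPnegne
        obtain ⟨em, hem, hemmin⟩ := Finset.exists_min_image Ppos
          (fun e => q e * v e / (q e * z e)) hPposne
        set tp : ℝ := -(q ep * v ep / (q ep * z ep)) with htp
        set tm : ℝ := q em * v em / (q em * z em) with htm
        have hepneg : q ep * z ep < 0 := by
          rw [hPneg] at hep; exact (Finset.mem_filter.mp hep).2
        have hempos : 0 < q em * z em := by
          rw [hPpos] at hem; exact (Finset.mem_filter.mp hem).2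
        have htppos : 0 < tp := by
          rw [htp, neg_pos]
          exact div_neg_of_pos_of_neg (hfact ep (Or.inl hep)) hepneg
        have htmpos : 0 < tm := by
          rw [htm]
          exact div_pos (hfact em (Or.inr hem)) hempos
        -- feasibility of shifted vectors
        have hfeas : ∀ t : ℝ, A'.mulVec (fun e => v e + t * z e) = b' := by
          intro t
          have heq : (fun e => v e + t * z e) = v + t • z := by
            funext e; simp [mul_comm]
          rw [heq, Matrix.mulVec_add, Matrix.mulVec_smul, hv, hzker]
          funext i; simp
        -- conformality of shifted vectors
        have hconfshift : ∀ t : ℝ, (∀ e, 0 ≤ q e * v e + t * (q e * z e)) →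
            Conf (fun e => v e + t * z e) := by
          intro t hall e
          constructor
          · intro hqe
            have hve : v e = 0 := (hconf e).1 hqe
            have hze : z e = 0 := by
              by_contra hze
              exact (hzsupp e hze) hve
            simp [hve, hze]
          · have hexp : q e * (v e + t * z e) = q e * v e + t * (q e * z e) := by ring
            rw [hexp]; exact hall e
        have hineqp : ∀ e, 0 ≤ q e * v e + tp * (q e * z e) := by
          intro e
          rcases lt_trichotomy (q e * z e) 0 with hlt | heq | hgt
          · have he : e ∈ Pneg := by
              rw [hPneg]
              simp only [Finset.mem_filter, Finset.mem_univ, true_and]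
              exact hlt
            have h1 : tp ≤ -(q e * v e / (q e * z e)) := hepmin e he
            have h2 := mul_le_mul_of_nonpos_right h1 (le_of_lt hlt)
            rw [neg_mul, div_mul_cancel₀ _ (ne_of_lt hlt)] at h2
            linarith
          · rw [heq, mul_zero]
            linarith [(hconf e).2]
          · have h := mul_nonneg (le_of_lt htppos) (le_of_lt hgt)
            linarith [(hconf e).2]
        have hineqm : ∀ e, 0 ≤ q e * v e + (-tm) * (q e * z e) := by
          intro e
          rcases lt_trichotomy (q e * z e) 0 with hlt | heq | hgt
          · have h := mul_nonneg (le_of_lt htmpos) (by linarith : (0:ℝ) ≤ -(q e * z e))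
            have heq2 : (-tm) * (q e * z e) = tm * (-(q e * z e)) := by ring
            rw [heq2]
            linarith [(hconf e).2]
          · rw [heq, mul_zero]
            linarith [(hconf e).2]
          · have he : e ∈ Ppos := by
              rw [hPpos]
              simp only [Finset.mem_filter, Finset.mem_univ, true_and]
              exact hgt
            have h1 : tm ≤ q e * v e / (q e * z e) := hemmin e he
            have h2 := mul_le_mul_of_nonneg_right h1 (le_of_lt hgt)
            rw [div_mul_cancel₀ _ (ne_of_gt hgt)] at h2
            have heq2 : (-tm) * (q e * z e) = -(tm * (q e * z e)) := by ring
            rw [heq2]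
            linarith
        -- support shrinks
        have hsupp_sub : ∀ t : ℝ,
            (Finset.univ.filter (fun e => v e + t * z e ≠ 0)) ⊆ S := by
          intro t e he
          simp only [Finset.mem_filter, Finset.mem_univ, true_and] at he
          rw [hSdef]
          simp only [Finset.mem_filter, Finset.mem_univ, true_and]
          intro hve
          have hze : z e = 0 := by
            by_contra hze
            exact (hzsupp e hze) hve
          rw [hve, hze, mul_zero, add_zero] at he
          exact he rfl
        have hepS : ep ∈ S := by
          rw [hSdef]
          simp only [Finset.mem_filter, Finset.mem_univ, true_and]
          intro h0
          have := hfact ep (Or.inl hep)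
          rw [h0, mul_zero] at this
          exact lt_irrefl 0 this
        have hemS : em ∈ S := by
          rw [hSdef]
          simp only [Finset.mem_filter, Finset.mem_univ, true_and]
          intro h0
          have := hfact em (Or.inr hem)
          rw [h0, mul_zero] at this
          exact lt_irrefl 0 this
        have hqep : q ep ≠ 0 := by
          intro h0
          have := hfact ep (Or.inl hep)
          rw [h0, zero_mul] at this
          exact lt_irrefl 0 this
        have hqem : q em ≠ 0 := by
          intro h0
          have := hfact em (Or.inr hem)
          rw [h0, zero_mul] at this
          exact lt_irrefl 0 this
        have hvpep : v ep + tp * z ep = 0 := by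
          have h0 : q ep * (v ep + tp * z ep) = 0 := by
            have hexp : q ep * (v ep + tp * z ep)
                = q ep * v ep + tp * (q ep * z ep) := by ring
            rw [hexp, htp, neg_mul, div_mul_cancel₀ _ (ne_of_lt hepneg)]
            ring
          rcases mul_eq_zero.mp h0 with h | h
          · exact absurd h hqep
          · exact h
        have hvmem : v em + (-tm) * z em = 0 := by
          have h0 : q em * (v em + (-tm) * z em) = 0 := by
            have hexp : q em * (v em + (-tm) * z em)
                = q em * v em + (-tm) * (q em * z em) := by ring
            rw [hexp, htm, neg_mul, div_mul_cancel₀ _ (ne_of_gt hempos)]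
            ring
          rcases mul_eq_zero.mp h0 with h | h
          · exact absurd h hqem
          · exact h
        -- cardinality decreases
        have hcardp : (Finset.univ.filter (fun e => v e + tp * z e ≠ 0)).card ≤ k := by
          have hss : (Finset.univ.filter (fun e => v e + tp * z e ≠ 0)) ⊂ S := by
            rw [Finset.ssubset_iff_of_subset (hsupp_sub tp)]
            exact ⟨ep, hepS, by simp [hvpep]⟩
          have := Finset.card_lt_card hss
          omega
        have hcardm : (Finset.univ.filter (fun e => v e + (-tm) * z e ≠ 0)).card ≤ k := by
          have hss : (Finset.univ.filter (fun e => v e + (-tm) * z e ≠ 0)) ⊂ S := by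
            rw [Finset.ssubset_iff_of_subset (hsupp_sub (-tm))]
            exact ⟨em, hemS, by simp; linarith [hvmem]⟩
          have := Finset.card_lt_card hss
          omega
        -- apply the induction hypothesis
        intro e
        have h1 := ih (fun e => v e + tp * z e) hcardp (hfeas tp) (hconfshift tp hineqp) e
        have h2 := ih (fun e => v e + (-tm) * z e) hcardm (hfeas (-tm))
          (hconfshift (-tm) hineqm) e
        have hs : 0 < tp + tm := by linarith
        have hcomb : v e = (tm / (tp + tm)) * (v e + tp * z e)
            + (tp / (tp + tm)) * (v e + (-tm) * z e) := by
          field_simp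
          ring
        rw [hcomb]
        calc |(tm / (tp + tm)) * (v e + tp * z e)
              + (tp / (tp + tm)) * (v e + (-tm) * z e)|
            ≤ (tm / (tp + tm)) * |v e + tp * z e|
              + (tp / (tp + tm)) * |v e + (-tm) * z e| := by
              refine le_trans (abs_add_le _ _) ?_
              rw [abs_mul, abs_mul,
                abs_of_nonneg (le_of_lt (div_pos htmpos hs)),
                abs_of_nonneg (le_of_lt (div_pos htppos hs))]
          _ ≤ (tm / (tp + tm)) * M + (tp / (tp + tm)) * M := by
              refine add_le_add ?_ ?_
              · exact mul_le_mul_of_nonneg_left h1 (le_of_lt (div_pos htmpos hs))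
              · exact mul_le_mul_of_nonneg_left h2 (le_of_lt (div_pos htppos hs))
          _ = M := by
              rw [← add_mul, ← add_div, add_comm tm tp, div_self (ne_of_gt hs), one_mul]
  exact main (Finset.univ.filter (fun e => q e ≠ 0)).card q le_rfl hq
    (fun e => ⟨fun h => h, mul_self_nonneg (q e)⟩)
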